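/- Let a, b, L ∈ ℝ with L ≠ 0, and let x, y, θ, v, ω, u_v, u_ω : ℝ → ℝ. Fix t ∈ ℝ and suppose x'(t) = v(t)cos θ(t), y'(t) = v(t)sin θ(t), θ'(t) = ω(t), v'(t) = −a v(t) + b u_v(t), ω'(t) = −a ω(t) + b u_ω(t). Define η₁ = x + L cos θ, ξ₁ = y + L sin θ, η₂ = v cos θ − Lω sin θ, ξ₂ = v sin θ + Lω cos θ, and u_η = cos θ·(−Lω² − a v + b u_v) − sin θ·(vω − aLω + bL u_ω), u_ξ = sin θ·(−Lω² − a v + b u_v) + cos θ·(vω − aLω + bL u_ω). Then at t: η₁'(t) = η₂(t), η₂'(t) = u_η(t), ξ₁'(t) = ξ₂(t), ξ₂'(t) = u_ξ(t), and θ'(t) = (ξ₂(t)cos θ(t) − η₂(t)sin θ(t))/L. -/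

import Mathlib

open Real

/-- Feedback linearization of the unicycle robot: the change of coordinates
`(η₁, ξ₁) = (x, y) + R_θ (L, 0)ᵀ`, `(η₂, ξ₂) = R_θ (v, Lω)ᵀ` with transformed
inputs `(u_η, u_ξ) = R_θ (−Lω² − av + bu_v, vω − aLω + bLu_ω)ᵀ` turns the
dynamics into two double integrators plus the zero dynamic
`θ' = (ξ₂ cos θ − η₂ sin θ)/L`. -/
theorem stmt3 (a b L : ℝ) (hL : L ≠ 0)
    (x y θ v ω u_v u_ω : ℝ → ℝ) (t : ℝ)
    (hx : HasDerivAt x (v t * cos (θ t)) t)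
    (hy : HasDerivAt y (v t * sin (θ t)) t)
    (hθ : HasDerivAt θ (ω t) t)
    (hv : HasDerivAt v (-a * v t + b * u_v t) t)
    (hω : HasDerivAt ω (-a * ω t + b * u_ω t) t)
    (η₁ ξ₁ η₂ ξ₂ u_η u_ξ : ℝ → ℝ)
    (hη₁ : η₁ = fun s => x s + L * cos (θ s))
    (hξ₁ : ξ₁ = fun s => y s + L * sin (θ s))
    (hη₂ : η₂ = fun s => v s * cos (θ s) - L * ω s * sin (θ s))
    (hξ₂ : ξ₂ = fun s => v s * sin (θ s) + L * ω s * cos (θ s))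
    (hu_η : u_η = fun s => cos (θ s) * (-L * (ω s) ^ 2 - a * v s + b * u_v s)
      - sin (θ s) * (v s * ω s - a * L * ω s + b * L * u_ω s))
    (hu_ξ : u_ξ = fun s => sin (θ s) * (-L * (ω s) ^ 2 - a * v s + b * u_v s)
      + cos (θ s) * (v s * ω s - a * L * ω s + b * L * u_ω s)) :
    HasDerivAt η₁ (η₂ t) t ∧ HasDerivAt η₂ (u_η t) t ∧
    HasDerivAt ξ₁ (ξ₂ t) t ∧ HasDerivAt ξ₂ (u_ξ t) t ∧
    ω t = (ξ₂ t * cos (θ t) - η₂ t * sin (θ t)) / L := by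
  subst hη₁ hξ₁ hη₂ hξ₂ hu_η hu_ξ
  have hc : HasDerivAt (fun s => cos (θ s)) (-sin (θ t) * ω t) t := by
    exact (Real.hasDerivAt_cos (θ t)).comp t hθ
  have hs : HasDerivAt (fun s => sin (θ s)) (cos (θ t) * ω t) t := by
    exact (Real.hasDerivAt_sin (θ t)).comp t hθ
  refine ⟨?_, ?_, ?_, ?_, ?_⟩
  · have := hx.add ((hc.const_mul L))
    exact this.congr_deriv (by ring)
  · have := ((hv.mul hc)).sub ((((hω.const_mul L)).mul hs))
    exact this.congr_deriv (by ring)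
  · have := hy.add ((hs.const_mul L))
    exact this.congr_deriv (by ring)
  · have := ((hv.mul hs)).add ((((hω.const_mul L)).mul hc))
    exact this.congr_deriv (by ring)
  · field_simp
    linear_combination (-(ω t) * L) * sin_sq_add_cos_sq (θ t)
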